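/- With the setup below, for every p ≥ 1 and every g ∈ G₁: |c^p| − 4K ≤ d^π_{g⁻¹𝓔}(o, g⁻¹c^p g.o) ≤ |c^p| + 4K; equivalently, π_{g⁻¹𝓔}(o) ⊆ B̄_{2K}(g⁻¹.o) and π_{g⁻¹𝓔}(g⁻¹c^p g.o) ⊆ B̄_{2K}(g⁻¹c^p.o). -/

import Mathlib

open Metric Set Filter Pointwise

namespace ACcogrowth

variable {X : Type*} [MetricSpace X]

/-- A map `γ` is a geodesic when restricted to the interval `[a,b]`. -/
def IsGeodesicOn (γ : ℝ → X) (a b : ℝ) : Prop :=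
  ∀ s ∈ Set.Icc a b, ∀ t ∈ Set.Icc a b, dist (γ s) (γ t) = |s - t|

/-- `X` is a geodesic metric space: any two points are joined by a geodesic. -/
def GeodesicSpace (X : Type*) [MetricSpace X] : Prop :=
  ∀ x y : X, ∃ γ : ℝ → X, IsGeodesicOn γ 0 (dist x y) ∧ γ 0 = x ∧ γ (dist x y) = y

/-- The nearest-point projection of `x` to `Y`. -/
def proj (Y : Set X) (x : X) : Set X := {y ∈ Y | dist x y = Metric.infDist x Y}

/-- The projection of a set `Z` to `Y`. -/
def projSet (Y Z : Set X) : Set X := ⋃ z ∈ Z, proj Y z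

/-- The projection distance `d^π_Y(Z,Z')`. -/
noncomputable def dpi (Y Z Z' : Set X) : ℝ := Metric.diam (projSet Y Z ∪ projSet Y Z')

/-- `Y` is `C`-strongly contracting. -/
def StronglyContractingWith (C : ℝ) (Y : Set X) : Prop :=
  0 ≤ C ∧ ∀ x x' : X, dist x x' ≤ Metric.infDist x Y →
    Metric.diam (proj Y x ∪ proj Y x') ≤ C

/-- `Y` is strongly contracting. -/
def StronglyContracting (Y : Set X) : Prop := ∃ C, StronglyContractingWith C Y

variable {G : Type*} [Group G] [MulAction G X]

/-- The action of `G` on `X` is (metrically) proper. -/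
def ProperAction (G : Type*) [Group G] [MulAction G X] (o : X) : Prop :=
  ∀ (x : X) (r : ℝ), {g : G | dist x (g • o) ≤ r}.Finite

/-- The orbit of the basepoint under the cyclic group generated by `c`. -/
def cOrbit (c : G) (o : X) : Set X := Set.range fun i : ℤ => c ^ i • o

/-- `c` is a strongly contracting element for the action. -/
def IsStronglyContractingElement (c : G) (o : X) : Prop :=
  ¬ IsOfFinOrder c ∧ StronglyContracting (cOrbit c o)

/-- The elementary closure `E(c)`: elements moving `⟨c⟩.o` a finite Hausdorff distance. -/
def Ec (c : G) (o : X) : Set G :=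
  {g : G | EMetric.hausdorffEdist (g • cOrbit c o) (cOrbit c o) ≠ ⊤}

/-- The axis `𝓔 = E(c).o`. -/
def Esub (c : G) (o : X) : Set X := (· • o) '' Ec c o

/-- The family of distinct `G`-translates of `𝓔`. -/
def translates (c : G) (o : X) : Set (Set X) := Set.range fun g : G => g • Esub c o

/-- Axiom (P0) with constant `θ` for the family of translates. -/
def AxiomP0 (c : G) (o : X) (θ : ℝ) : Prop :=
  ∀ 𝓨 ∈ translates c o, ∀ 𝓧 ∈ translates c o, 𝓧 ≠ 𝓨 → dpi 𝓨 𝓧 𝓧 ≤ θ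

/-- Axiom (P1) with constant `θ` for the family of translates. -/
def AxiomP1 (c : G) (o : X) (θ : ℝ) : Prop :=
  ∀ 𝓧 ∈ translates c o, ∀ 𝓨 ∈ translates c o, ∀ 𝓩 ∈ translates c o,
    𝓧 ≠ 𝓨 → 𝓨 ≠ 𝓩 → 𝓧 ≠ 𝓩 → dpi 𝓨 𝓧 𝓩 > θ → dpi 𝓧 𝓨 𝓩 ≤ θ

/-- `C'` is a bounded-geodesic-image constant for all translates of `𝓔`. -/
def BGIconst (c : G) (o : X) (C' : ℝ) : Prop :=
  ∀ g : G, ∀ γ : ℝ → X, ∀ a b : ℝ, IsGeodesicOn γ a b →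
    (∀ t ∈ Set.Icc a b, C' ≤ Metric.infDist (γ t) (g • Esub c o)) →
    Metric.diam (projSet (g • Esub c o) (γ '' Set.Icc a b)) ≤ C'

/-- The set `G₁`. -/
def Gone (c : G) (o : X) (K : ℝ) : Set G :=
  {g : G | dpi (Esub c o) {o} {g • o} ≤ 2 * K ∧
    dpi (g • Esub c o) {o} {g • o} ≤ 2 * K ∧ g • Esub c o ≠ Esub c o}

/-- The set `G_{2,p}` of conjugates of `c^p` by elements of `G₁`. -/
def Gtwo (c : G) (o : X) (K : ℝ) (p : ℕ) : Set G :=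
  (fun g : G => g⁻¹ * c ^ p * g) '' Gone c o K

/-- A subset `S` of `G` is `s`-separated (with respect to the orbit pseudo-metric). -/
def SeparatedSet (o : X) (s : ℝ) (S : Set G) : Prop :=
  ∀ x ∈ S, ∀ y ∈ S, x ≠ y → s ≤ dist (x • o) (y • o)

/-- There is a geodesic from `x` to `y` passing within distance `D` of `z`. -/
def GeodesicPassesNear (x y z : X) (D : ℝ) : Prop :=
  ∃ γ : ℝ → X, IsGeodesicOn γ 0 (dist x y) ∧ γ 0 = x ∧ γ (dist x y) = y ∧
    ∃ t ∈ Set.Icc 0 (dist x y), dist (γ t) z ≤ D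

/-- The shadowed subset `G'_{4,p,D}` of a given set `G₃`. -/
def Gfour' (c : G) (o : X) (G₃ : Set G) (p : ℕ) (D : ℝ) : Set G :=
  {x ∈ G₃ | ∃ y ∈ G₃, y ≠ x ∧ GeodesicPassesNear o (x • o) ((y * c ^ (2 * p)) • o) D}

/-- The growth rate of a subset `H ⊆ G` with respect to the induced pseudo-metric. -/
noncomputable def growthRate (o : X) (H : Set G) : ℝ :=
  Filter.limsup
    (fun r : ℝ => Real.log (({h ∈ H | dist o (h • o) ≤ r}).ncard) / r) Filter.atTop

/-- The growth rate of a subset `B ⊆ X`. -/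
noncomputable def growthRateX (o : X) (B : Set X) : ℝ :=
  Filter.limsup
    (fun r : ℝ => Real.log (({b ∈ B | dist o b ≤ r}).ncard) / r) Filter.atTop

/-- `H` is divergent: its Poincaré series diverges at `s = δ_H`. -/
def Divergent (o : X) (H : Set G) : Prop :=
  ¬ Summable fun h : H => Real.exp (-(growthRate o H) * dist o ((h : G) • o))

/-- `G` has purely exponential growth with rate `δ`, shell width `Δ` and constant `A`. -/
def PurelyExponentialWith (G : Type*) [Group G] [MulAction G X] (o : X)
    (δ Δ A : ℝ) : Prop :=
  0 < δ ∧ 0 < Δ ∧ 1 ≤ A ∧ ∀ r : ℝ, 0 ≤ r →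
    Real.exp (δ * r) / A ≤
        (({g : G | r < dist o (g • o) ∧ dist o (g • o) ≤ r + Δ}).ncard : ℝ) ∧
    (({g : G | r < dist o (g • o) ∧ dist o (g • o) ≤ r + Δ}).ncard : ℝ) ≤
        A * Real.exp (δ * r)

/-- `G` has purely exponential growth. -/
def PurelyExponential (G : Type*) [Group G] [MulAction G X] (o : X) : Prop :=
  ∃ δ Δ A : ℝ, PurelyExponentialWith G o δ Δ A

/-- The tree's-worth map: `(g₁, …, g_k) ↦ (g₁ c g₂ c ⋯ g_k c).o`. -/
def treeMap (o : X) (c : G) (l : List G) : X := (l.map fun g => g * c).prod • o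


section Helpers

variable {G : Type*} [Group G] [MulAction G X] [IsIsometricSMul G X]

lemma infDist_smul' (g : G) (x : X) (Y : Set X) :
    Metric.infDist (g • x) (g • Y) = Metric.infDist x Y := by
  rw [← Set.image_smul]
  exact Metric.infDist_image (isometry_smul X g)

lemma hausdorffEdist_smul' (g : G) (s t : Set X) :
    EMetric.hausdorffEdist (g • s) (g • t) = EMetric.hausdorffEdist s t := by
  rw [← Set.image_smul, ← Set.image_smul]
  exact EMetric.hausdorffEdist_image (isometry_smul X g)

lemma proj_smul' (g : G) (Y : Set X) (x : X) :
    proj (g • Y) (g • x) = g • proj Y x := by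
  have hinf := infDist_smul' g x Y
  ext y
  constructor
  · rintro ⟨hy, hd⟩
    obtain ⟨z, hz, rfl⟩ := hy
    refine ⟨z, ⟨hz, ?_⟩, rfl⟩
    rwa [dist_smul, hinf] at hd
  · rintro ⟨z, ⟨hz, hd⟩, rfl⟩
    exact ⟨Set.smul_mem_smul_set hz, by rw [dist_smul, hinf]; exact hd⟩

lemma proj_self' (Y : Set X) (x : X) (hx : x ∈ Y) : proj Y x = {x} := by
  ext y
  simp only [proj, Set.mem_setOf_eq, Set.mem_singleton_iff,
    Metric.infDist_zero_of_mem hx, dist_eq_zero]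
  constructor
  · rintro ⟨-, rfl⟩; rfl
  · rintro rfl; exact ⟨hx, rfl⟩

lemma proj_subset_closedBall (Y : Set X) (x : X) :
    proj Y x ⊆ Metric.closedBall x (Metric.infDist x Y) := by
  rintro y ⟨-, hd⟩
  simpa [Metric.mem_closedBall, dist_comm] using hd.le

lemma projSet_singleton (Y : Set X) (z : X) : projSet Y {z} = proj Y z := by
  simp [projSet]

lemma smul_cOrbit (c : G) (o : X) : c • cOrbit c o = cOrbit c o := by
  ext x
  constructor
  · rintro ⟨y, ⟨i, rfl⟩, rfl⟩
    refine ⟨1 + i, ?_⟩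
    simp only [zpow_one_add, mul_smul, zpow_one]
  · rintro ⟨i, rfl⟩
    refine ⟨c ^ (i - 1) • o, ⟨i - 1, rfl⟩, ?_⟩
    show c • c ^ (i - 1) • o = c ^ i • o
    rw [smul_smul, ← zpow_one_add]
    congr 2
    ring

lemma Ec_one (c : G) (o : X) : (1 : G) ∈ Ec c o := by
  simp only [Ec, Set.mem_setOf_eq, one_smul]
  simp [EMetric.hausdorffEdist, Metric.hausdorffEDist_self]

lemma Ec_mul {c : G} {o : X} {a b : G} (ha : a ∈ Ec c o) (hb : b ∈ Ec c o) :
    a * b ∈ Ec c o := by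
  simp only [Ec, Set.mem_setOf_eq] at *
  have h1 : EMetric.hausdorffEdist ((a * b) • cOrbit c o) (cOrbit c o) ≤
      EMetric.hausdorffEdist ((a * b) • cOrbit c o) (a • cOrbit c o) +
        EMetric.hausdorffEdist (a • cOrbit c o) (cOrbit c o) :=
    EMetric.hausdorffEdist_triangle
  have h2 : EMetric.hausdorffEdist ((a * b) • cOrbit c o) (a • cOrbit c o) =
      EMetric.hausdorffEdist (b • cOrbit c o) (cOrbit c o) := by
    rw [mul_smul]
    exact hausdorffEdist_smul' a _ _
  rw [h2] at h1
  exact ne_top_of_le_ne_top (ENNReal.add_ne_top.2 ⟨hb, ha⟩) h1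

lemma Ec_inv {c : G} {o : X} {a : G} (ha : a ∈ Ec c o) : a⁻¹ ∈ Ec c o := by
  simp only [Ec, Set.mem_setOf_eq] at *
  have : EMetric.hausdorffEdist (a⁻¹ • cOrbit c o) (cOrbit c o) =
      EMetric.hausdorffEdist (cOrbit c o) (a • cOrbit c o) := by
    rw [← hausdorffEdist_smul' a (a⁻¹ • cOrbit c o) (cOrbit c o), smul_inv_smul]
  rw [this, EMetric.hausdorffEdist, Metric.hausdorffEDist_comm]
  exact ha

lemma Ec_c (c : G) (o : X) : c ∈ Ec c o := by
  simp only [Ec, Set.mem_setOf_eq, smul_cOrbit]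
  simp [EMetric.hausdorffEdist, Metric.hausdorffEDist_self]

lemma Ec_pow (c : G) (o : X) (p : ℕ) : c ^ p ∈ Ec c o := by
  induction p with
  | zero => simpa using Ec_one c o
  | succ n ih => rw [pow_succ]; exact Ec_mul ih (Ec_c c o)

lemma o_mem_Esub (c : G) (o : X) : o ∈ Esub c o :=
  ⟨1, Ec_one c o, one_smul _ _⟩

lemma smul_Esub {c : G} {o : X} {a : G} (ha : a ∈ Ec c o) :
    a • Esub c o = Esub c o := by
  ext x
  constructor
  · rintro ⟨y, ⟨e, he, rfl⟩, rfl⟩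
    refine ⟨a * e, Ec_mul ha he, ?_⟩
    show (a * e) • o = a • e • o
    rw [mul_smul]
  · rintro ⟨e, he, rfl⟩
    refine ⟨(a⁻¹ * e) • o, ⟨a⁻¹ * e, Ec_mul (Ec_inv ha) he, rfl⟩, ?_⟩
    show a • (a⁻¹ * e) • o = e • o
    rw [smul_smul, mul_inv_cancel_left]

lemma proj_Esub_nonempty (o : X) (hproper : ProperAction G o) (c : G) (x : X) :
    (proj (Esub c o) x).Nonempty := by
  set d := Metric.infDist x (Esub c o) with hd
  have hEne : (Esub c o).Nonempty := ⟨o, o_mem_Esub c o⟩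
  have hdnn : 0 ≤ d := Metric.infDist_nonneg
  have hlt : d < d + 1 := by linarith
  obtain ⟨y, hy, hylt⟩ := (Metric.infDist_lt_iff hEne).1 hlt
  obtain ⟨e₁, he₁, rfl⟩ := hy
  set T : Set G := {e ∈ Ec c o | dist x (e • o) ≤ d + 1} with hT
  have hTfin : T.Finite := (hproper x (d + 1)).subset fun e he => he.2
  have hTne : T.Nonempty := ⟨e₁, he₁, hylt.le⟩
  obtain ⟨e₀, he₀, hmin⟩ := Set.exists_min_image T (fun e => dist x (e • o)) hTfin hTne
  have hmem : e₀ • o ∈ Esub c o := ⟨e₀, he₀.1, rfl⟩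
  have hall : ∀ z ∈ Esub c o, dist x (e₀ • o) ≤ dist x z := by
    rintro z ⟨e, he, rfl⟩
    by_cases h : dist x (e • o) ≤ d + 1
    · exact hmin e ⟨he, h⟩
    · exact le_trans he₀.2 (le_of_not_ge h)
  refine ⟨e₀ • o, hmem, le_antisymm ?_ (Metric.infDist_le_dist_of_mem hmem)⟩
  by_contra h
  push_neg at h
  obtain ⟨z, hz, hzlt⟩ := (Metric.infDist_lt_iff hEne).1 h
  exact absurd (hall z hz) (not_le.2 hzlt)

end Helpers

/-- **Lemma.** For every `p ≥ 1` and every `g ∈ G₁`: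
`|c^p| − 4K ≤ d^π_{g⁻¹𝓔}(o, g⁻¹c^p g.o) ≤ |c^p| + 4K`; equivalently
`π_{g⁻¹𝓔}(o) ⊆ B̄_{2K}(g⁻¹.o)` and `π_{g⁻¹𝓔}(g⁻¹c^p g.o) ⊆ B̄_{2K}(g⁻¹c^p.o)`. -/
theorem projection_distance_conjugate
    {G : Type*} [Group G] {X : Type*} [MetricSpace X]
    [MulAction G X] [IsIsometricSMul G X] (o : X)
    (hgeo : GeodesicSpace X)
    (hproper : ProperAction G o)
    (c : G) (C K : ℝ)
    (hcords : ¬ IsOfFinOrder c)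
    (hcC : StronglyContractingWith C (cOrbit c o))
    (hK : K > C) :
    ∀ p : ℕ, 1 ≤ p → ∀ g ∈ Gone c o K,
      (dist o (c ^ p • o) - 4 * K ≤
          dpi (g⁻¹ • Esub c o) {o} {(g⁻¹ * c ^ p * g) • o} ∧
        dpi (g⁻¹ • Esub c o) {o} {(g⁻¹ * c ^ p * g) • o} ≤
          dist o (c ^ p • o) + 4 * K) ∧
      proj (g⁻¹ • Esub c o) o ⊆ Metric.closedBall (g⁻¹ • o) (2 * K) ∧
      proj (g⁻¹ • Esub c o) ((g⁻¹ * c ^ p * g) • o) ⊆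
        Metric.closedBall ((g⁻¹ * c ^ p) • o) (2 * K) := by
  intro p hp g hg
  obtain ⟨hg1, hg2, hg3⟩ := hg
  have hC0 : 0 ≤ C := hcC.1
  have hK0 : 0 ≤ K := le_of_lt (lt_of_le_of_lt hC0 hK)
  -- the projection of g•o to 𝓔
  set P : Set X := proj (Esub c o) (g • o) with hPdef
  have hPne : P.Nonempty := proj_Esub_nonempty o hproper c (g • o)
  -- rewrite the first Gone condition
  rw [dpi, projSet_singleton, projSet_singleton,
    proj_self' _ _ (o_mem_Esub c o)] at hg1
  have hUb : Bornology.IsBounded ({o} ∪ P : Set X) :=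
    Bornology.isBounded_singleton.union
      (Metric.isBounded_closedBall.subset (proj_subset_closedBall _ _))
  have key : ∀ y ∈ P, dist o y ≤ 2 * K := fun y hy =>
    le_trans (Metric.dist_le_diam_of_mem hUb (Or.inl rfl) (Or.inr hy)) hg1
  have hPball : P ⊆ Metric.closedBall o (2 * K) := fun y hy => by
    simpa [Metric.mem_closedBall, dist_comm] using key y hy
  -- identify the two projections
  have hP1 : proj (g⁻¹ • Esub c o) o = g⁻¹ • P := by
    have h := proj_smul' g⁻¹ (Esub c o) (g • o)
    rwa [inv_smul_smul] at h
  have hgE : (g⁻¹ * c ^ p) • Esub c o = g⁻¹ • Esub c o := by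
    rw [mul_smul, smul_Esub (Ec_pow c o p)]
  have hP2 : proj (g⁻¹ • Esub c o) ((g⁻¹ * c ^ p * g) • o) = (g⁻¹ * c ^ p) • P := by
    have h := proj_smul' (g⁻¹ * c ^ p) (Esub c o) (g • o)
    rw [hgE] at h
    rw [mul_smul (g⁻¹ * c ^ p) g o]
    exact h
  -- ball containments
  have hB1 : proj (g⁻¹ • Esub c o) o ⊆ Metric.closedBall (g⁻¹ • o) (2 * K) := by
    rw [hP1, ← Metric.smul_closedBall]
    exact Set.smul_set_mono hPball
  have hB2 : proj (g⁻¹ • Esub c o) ((g⁻¹ * c ^ p * g) • o) ⊆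
      Metric.closedBall ((g⁻¹ * c ^ p) • o) (2 * K) := by
    rw [hP2, ← Metric.smul_closedBall]
    exact Set.smul_set_mono hPball
  refine ⟨?_, hB1, hB2⟩
  -- distance between the two centers
  set L : ℝ := dist o (c ^ p • o) with hLdef
  have hL0 : 0 ≤ L := dist_nonneg
  have hLd : dist (g⁻¹ • o) ((g⁻¹ * c ^ p) • o) = L := by
    rw [mul_smul, dist_smul]
  set Q : Set X := proj (g⁻¹ • Esub c o) o ∪
    proj (g⁻¹ • Esub c o) ((g⁻¹ * c ^ p * g) • o) with hQdef
  have hdpi_eq : dpi (g⁻¹ • Esub c o) {o} {(g⁻¹ * c ^ p * g) • o} = Metric.diam Q := by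
    rw [dpi, projSet_singleton, projSet_singleton]
  have hQsub : Q ⊆ Metric.closedBall (g⁻¹ • o) (2 * K) ∪
      Metric.closedBall ((g⁻¹ * c ^ p) • o) (2 * K) := Set.union_subset_union hB1 hB2
  have hQb : Bornology.IsBounded Q :=
    (Metric.isBounded_closedBall.union Metric.isBounded_closedBall).subset hQsub
  constructor
  · -- lower bound
    obtain ⟨y, hy⟩ := hPne
    have hy1 : g⁻¹ • y ∈ Q := Or.inl (hP1 ▸ Set.smul_mem_smul_set hy)
    have hy2 : (g⁻¹ * c ^ p) • y ∈ Q := Or.inr (hP2 ▸ Set.smul_mem_smul_set hy)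
    have hd1 : dist (g⁻¹ • y) (g⁻¹ • o) ≤ 2 * K := by
      have := hB1 (hP1 ▸ Set.smul_mem_smul_set hy)
      simpa [Metric.mem_closedBall] using this
    have hd2 : dist ((g⁻¹ * c ^ p) • y) ((g⁻¹ * c ^ p) • o) ≤ 2 * K := by
      have := hB2 (hP2 ▸ Set.smul_mem_smul_set hy)
      simpa [Metric.mem_closedBall] using this
    have hdm : dist (g⁻¹ • y) ((g⁻¹ * c ^ p) • y) ≤ Metric.diam Q :=
      Metric.dist_le_diam_of_mem hQb hy1 hy2
    have htri : dist (g⁻¹ • o) ((g⁻¹ * c ^ p) • o) ≤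
        dist (g⁻¹ • o) (g⁻¹ • y) + dist (g⁻¹ • y) ((g⁻¹ * c ^ p) • y) +
          dist ((g⁻¹ * c ^ p) • y) ((g⁻¹ * c ^ p) • o) := dist_triangle4 _ _ _ _
    rw [hLd] at htri
    rw [hdpi_eq]
    have hd1' : dist (g⁻¹ • o) (g⁻¹ • y) ≤ 2 * K := by rwa [dist_comm] at hd1
    linarith
  · -- upper bound
    rw [hdpi_eq]
    apply Metric.diam_le_of_forall_dist_le (by linarith)
    intro u hu v hv
    have hu' := hQsub hu
    have hv' := hQsub hv
    rcases hu' with hu' | hu' <;> rcases hv' with hv' | hv' <;>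
      rw [Metric.mem_closedBall] at hu' hv'
    · have := dist_triangle u (g⁻¹ • o) v
      rw [dist_comm (g⁻¹ • o) v] at this
      linarith
    · have := dist_triangle4 u (g⁻¹ • o) ((g⁻¹ * c ^ p) • o) v
      rw [hLd, dist_comm ((g⁻¹ * c ^ p) • o) v] at this
      linarith
    · have := dist_triangle4 u ((g⁻¹ * c ^ p) • o) (g⁻¹ • o) v
      rw [dist_comm ((g⁻¹ * c ^ p) • o) (g⁻¹ • o), hLd,
        dist_comm (g⁻¹ • o) v] at this
      linarith
    · have := dist_triangle u ((g⁻¹ * c ^ p) • o) v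
      rw [dist_comm ((g⁻¹ * c ^ p) • o) v] at this
      linarith

end ACcogrowth
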